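/- Let C be a nonnegative n×n matrix with row-sum vector (r_1,...,r_n)^T, Π = {π_1,...,π_ℓ} a partition of {1,...,n} with n ∈ π_ℓ, and C' an n×n matrix admitting an equitable quotient matrix Π(C') with respect to Π such that: (i) C[−|n) ≥ C'[−|n) entrywise, and Π(C') has row-sum vector with a-th entry equal to min_{i∈π_a} r_i; (ii) Π(C') has a rooted (not necessarily positive) eigenvector for some nonnegative real eigenvalue λ'. Then ρ(C) ≥ λ'. -/

import Mathlib

open Matrix Polynomial Filter
open scoped ENNReal NNReal Topology

/-- Spectral radius of a real square matrix: maximum modulus of its complex eigenvalues. -/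
noncomputable def specRad {n : ℕ} (A : Matrix (Fin n) (Fin n) ℝ) : ℝ :=
  ((A.map (fun x => (x : ℂ))).charpoly.roots.map (fun z => ‖z‖)).foldr max 0

/-- A vector is rooted if every entry is at least the last entry, which is nonnegative. -/
def Rooted {n : ℕ} (v : Fin (n + 1) → ℝ) : Prop :=
  0 ≤ v (Fin.last n) ∧ ∀ j, v (Fin.last n) ≤ v j

lemma mem_le_foldr_max (s : Multiset ℝ) (a : ℝ) (h : a ∈ s) : a ≤ s.foldr max 0 := by
  induction s using Multiset.induction_on with
  | empty => simp at h
  | cons b t ih =>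
    rw [Multiset.foldr_cons]
    rcases Multiset.mem_cons.mp h with rfl | h'
    · exact le_max_left _ _
    · exact le_trans (ih h') (le_max_right _ _)

lemma zero_le_foldr_max (s : Multiset ℝ) : 0 ≤ s.foldr max 0 := by
  induction s using Multiset.induction_on with
  | empty => simp
  | cons b t ih => rw [Multiset.foldr_cons]; exact le_trans ih (le_max_right _ _)


section spectral

attribute [local instance] Matrix.linftyOpNormedRing Matrix.linftyOpNormedAlgebra
  Matrix.linftyOpNormedAddCommGroup

variable {m : ℕ}

lemma spec_to_root (A : Matrix (Fin (m+1)) (Fin (m+1)) ℂ) {μ : ℂ}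
    (h : μ ∈ spectrum ℂ A) : A.charpoly.IsRoot μ := by
  rw [spectrum.mem_iff] at h
  have hdet : ((algebraMap ℂ (Matrix (Fin (m+1)) (Fin (m+1)) ℂ)) μ - A).det = 0 := by
    by_contra hne
    exact h ((Matrix.isUnit_iff_isUnit_det _).mpr (isUnit_iff_ne_zero.mpr hne))
  have : A.charpoly.eval μ = ((charmatrix A).map (evalRingHom μ)).det := by
    show (evalRingHom μ) (charmatrix A).det = _
    rw [RingHom.map_det, RingHom.mapMatrix_apply]
  rw [IsRoot, this, ← hdet]
  congr 1
  ext i j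
  by_cases hij : i = j <;>
    simp [hij, charmatrix_apply, Matrix.map_apply, Matrix.algebraMap_matrix_apply,
      Matrix.diagonal_apply, Matrix.sub_apply]

lemma spectralRadius_le_specRad (C : Matrix (Fin (m+1)) (Fin (m+1)) ℝ) :
    spectralRadius ℂ (C.map (fun x => (x : ℂ))) ≤ ENNReal.ofReal (specRad C) := by
  rw [spectralRadius]
  refine iSup₂_le fun μ hμ => ?_
  have hroot := spec_to_root _ hμ
  have hmem : μ ∈ (C.map (fun x => (x : ℂ))).charpoly.roots :=
    (mem_roots (Matrix.charpoly_monic _).ne_zero).mpr hroot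
  have : ‖μ‖ ≤ specRad C :=
    mem_le_foldr_max _ _ (Multiset.mem_map_of_mem _ hmem)
  have hn : (‖μ‖₊ : ℝ≥0∞) = ENNReal.ofReal ‖μ‖ := by
    exact (ENNReal.ofReal_eq_coe_nnreal (norm_nonneg μ)).symm
  rw [hn]
  exact ENNReal.ofReal_le_ofReal this

end spectral

section spectral2

attribute [local instance] Matrix.linftyOpNormedRing Matrix.linftyOpNormedAlgebra
  Matrix.linftyOpNormedAddCommGroup

variable {m : ℕ}

lemma nnnorm_map_complex (M : Matrix (Fin (m+1)) (Fin (m+1)) ℝ) :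
    ‖M.map (fun x => (x : ℂ))‖₊ = ‖M‖₊ := by
  rw [Matrix.linfty_opNNNorm_def, Matrix.linfty_opNNNorm_def]
  congr 1
  ext i
  congr 1
  ext j
  simp [Matrix.map_apply]

lemma le_specRad_of_subeigen (C : Matrix (Fin (m+1)) (Fin (m+1)) ℝ)
    (hC : ∀ i j, 0 ≤ C i j) {lam : ℝ} (hlam : 0 ≤ lam)
    {v : Fin (m+1) → ℝ} (hv : ∀ j, 0 ≤ v j) (hv0 : v ≠ 0)
    (hmv : ∀ i, lam * v i ≤ C.mulVec v i) : lam ≤ specRad C := by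
  have hspec0 : (0:ℝ) ≤ specRad C := zero_le_foldr_max _
  rcases eq_or_lt_of_le hlam with rfl|hlam'
  · exact hspec0
  obtain ⟨i0, hi0⟩ : ∃ i, 0 < v i := by
    by_contra h
    push_neg at h
    exact hv0 (funext fun i => le_antisymm (h i) (hv i))
  have hpownn : ∀ k : ℕ, ∀ i j, 0 ≤ (C^k) i j := by
    intro k
    induction k with
    | zero => intro i j; by_cases h : i = j <;> simp [Matrix.one_apply, h]
    | succ k ih =>
      intro i j
      rw [pow_succ, Matrix.mul_apply]
      exact Finset.sum_nonneg fun l _ => mul_nonneg (ih i l) (hC l j)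
  have key : ∀ k : ℕ, ∀ i, lam^k * v i ≤ (C^k).mulVec v i := by
    intro k
    induction k with
    | zero => intro i; simp [Matrix.one_mulVec]
    | succ k ih =>
      intro i
      have h1 : (C^(k+1)).mulVec v i = C.mulVec ((C^k).mulVec v) i := by
        rw [Matrix.mulVec_mulVec, ← pow_succ']
      rw [h1]
      have h2 : ∀ j, lam^k * v j ≤ (C^k).mulVec v j := ih
      calc lam^(k+1) * v i = lam^k * (lam * v i) := by ring
        _ ≤ lam^k * (C.mulVec v i) := by
            apply mul_le_mul_of_nonneg_left (hmv i) (pow_nonneg hlam k)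
        _ = ∑ j, C i j * (lam^k * v j) := by
            simp only [Matrix.mulVec, dotProduct, Finset.mul_sum]
            exact Finset.sum_congr rfl fun x _ => by ring
        _ ≤ ∑ j, C i j * ((C^k).mulVec v j) :=
            Finset.sum_le_sum fun j _ => mul_le_mul_of_nonneg_left (h2 j) (hC i j)
        _ = C.mulVec ((C^k).mulVec v) i := rfl
  have hvnorm : (0:ℝ) < ‖v‖ := norm_pos_iff.mpr hv0
  set K : ℝ := ‖v‖ / v i0 with hK
  have hKpos : 0 < K := div_pos hvnorm hi0
  have hbound : ∀ k : ℕ, lam ^ k ≤ ‖C^k‖ * K := by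
    intro k
    rw [hK, ← mul_div_assoc, le_div_iff₀ hi0]
    calc lam^k * v i0 ≤ (C^k).mulVec v i0 := key k i0
      _ ≤ ‖(C^k).mulVec v‖ := by
          have h := norm_le_pi_norm ((C^k).mulVec v) i0
          rw [Real.norm_eq_abs] at h
          exact (le_abs_self _).trans h
      _ ≤ ‖C^k‖ * ‖v‖ := Matrix.linfty_opNorm_mulVec _ _
  set A : Matrix (Fin (m+1)) (Fin (m+1)) ℂ := C.map (fun x => (x : ℂ)) with hA
  have hpowA : ∀ k : ℕ, A ^ k = (C^k).map (fun x => (x : ℂ)) := by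
    intro k
    have : A = Complex.ofRealHom.mapMatrix C := rfl
    rw [this, ← map_pow]
    rfl
  have hAk : ∀ k : ℕ, ‖A^k‖₊ = ‖C^k‖₊ := fun k => by
    rw [hpowA, nnnorm_map_complex]
  have hstep : ∀ k : ℕ, 1 ≤ k →
      ENNReal.ofReal lam ≤ (‖A^k‖₊ : ℝ≥0∞)^(1/(k:ℝ)) * (ENNReal.ofReal K)^(1/(k:ℝ)) := by
    intro k hk
    have hk0 : (k:ℝ) ≠ 0 := Nat.cast_ne_zero.mpr (by omega)
    have h2 : ENNReal.ofReal lam ^ k ≤ (‖A^k‖₊ : ℝ≥0∞) * ENNReal.ofReal K := by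
      rw [← ENNReal.ofReal_pow hlam, hAk, ← ENNReal.ofReal_coe_nnreal, coe_nnnorm,
        ← ENNReal.ofReal_mul (norm_nonneg _)]
      exact ENNReal.ofReal_le_ofReal (hbound k)
    calc ENNReal.ofReal lam = (ENNReal.ofReal lam ^ k) ^ (1/(k:ℝ)) := by
          rw [← ENNReal.rpow_natCast, ← ENNReal.rpow_mul, mul_one_div_cancel hk0,
            ENNReal.rpow_one]
      _ ≤ ((‖A^k‖₊ : ℝ≥0∞) * ENNReal.ofReal K) ^ (1/(k:ℝ)) :=
          ENNReal.rpow_le_rpow h2 (by positivity)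
      _ = _ := ENNReal.mul_rpow_of_nonneg _ _ (by positivity)
  have hgel := spectrum.pow_nnnorm_pow_one_div_tendsto_nhds_spectralRadius A
  have hr : Tendsto (fun k : ℕ => (1/(k:ℝ))) atTop (𝓝 0) :=
    tendsto_one_div_atTop_nhds_zero_nat
  have htend2 : Tendsto (fun k : ℕ => (ENNReal.ofReal K)^(1/(k:ℝ))) atTop (𝓝 1) := by
    have hc : Tendsto (fun k : ℕ => ENNReal.ofReal (K ^ (1/(k:ℝ)))) atTop
        (𝓝 (ENNReal.ofReal (K ^ (0:ℝ)))) :=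
      (ENNReal.continuous_ofReal.tendsto _).comp
        (((Real.continuousAt_const_rpow (ne_of_gt hKpos)).tendsto).comp hr)
    simp only [Real.rpow_zero, ENNReal.ofReal_one] at hc
    convert hc using 2 with k
    rw [ENNReal.ofReal_rpow_of_pos hKpos]
  have hmul := ENNReal.Tendsto.mul hgel (Or.inr ENNReal.one_ne_top) htend2
    (Or.inl one_ne_zero)
  rw [mul_one] at hmul
  have hle : ENNReal.ofReal lam ≤ spectralRadius ℂ A :=
    ge_of_tendsto hmul (eventually_atTop.mpr ⟨1, hstep⟩)
  have := hle.trans (spectralRadius_le_specRad C)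
  exact (ENNReal.ofReal_le_ofReal_iff hspec0).mp this

end spectral2


theorem stmt_17 {n ℓ : ℕ}
    (C : Matrix (Fin (n + 1)) (Fin (n + 1)) ℝ) (hC : ∀ i j, 0 ≤ C i j)
    (r : Fin (n + 1) → ℝ) (hrdef : ∀ i, r i = ∑ j, C i j)
    (π : Fin (n + 1) → Fin (ℓ + 1)) (hπ : Function.Surjective π)
    (hπlast : π (Fin.last n) = Fin.last ℓ)
    (S : Matrix (Fin (n + 1)) (Fin (ℓ + 1)) ℝ)
    (hS : S = Matrix.of fun j b => if π j = b then (1 : ℝ) else 0)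
    (C' : Matrix (Fin (n + 1)) (Fin (n + 1)) ℝ)
    (B : Matrix (Fin (ℓ + 1)) (Fin (ℓ + 1)) ℝ)
    (hquot : S * B = C' * S)
    (h1 : ∀ i j, j ≠ Fin.last n → C' i j ≤ C i j)
    (h1' : ∀ a : Fin (ℓ + 1), IsLeast {x : ℝ | ∃ i, π i = a ∧ x = r i} (∑ b, B a b))
    (lam' : ℝ) (hlam' : 0 ≤ lam') (u : Fin (ℓ + 1) → ℝ)
    (hu0 : u ≠ 0) (hurooted : Rooted u)
    (heig : B.mulVec u = lam' • u) :
    lam' ≤ specRad C := by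
  classical
  obtain ⟨hL0, hLle⟩ := hurooted
  have hSv : ∀ (w : Fin (ℓ+1) → ℝ) j, S.mulVec w j = w (π j) := by
    intro w j
    simp [hS, Matrix.mulVec, dotProduct]
  set v : Fin (n+1) → ℝ := S.mulVec u with hv
  have hvj : ∀ j, v j = u (π j) := hSv u
  have hvnn : ∀ j, 0 ≤ v j := fun j => (hvj j) ▸ le_trans hL0 (hLle (π j))
  have hv0 : v ≠ 0 := by
    intro h
    apply hu0
    funext b
    obtain ⟨j, rfl⟩ := hπ b
    have hj := congrFun h j
    rw [hvj j] at hj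
    exact hj
  have heigv : C'.mulVec v = lam' • v := by
    rw [hv, Matrix.mulVec_mulVec, ← hquot, ← Matrix.mulVec_mulVec, heig,
      Matrix.mulVec_smul]
  have hones : S.mulVec (fun _ => (1:ℝ)) = fun _ => (1:ℝ) := by
    funext j
    rw [hSv]
  have hrowsum : ∀ i, ∑ j, C' i j = ∑ b, B (π i) b := by
    intro i
    have h := congrFun (congrArg (fun M => Matrix.mulVec M (fun _ => (1:ℝ))) hquot) i
    simp only [← Matrix.mulVec_mulVec, hones] at h
    rw [hSv] at h
    have l1 : B.mulVec (fun _ => (1:ℝ)) (π i) = ∑ b, B (π i) b := by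
      simp [Matrix.mulVec, dotProduct]
    have l2 : C'.mulVec (fun _ => (1:ℝ)) i = ∑ j, C' i j := by
      simp [Matrix.mulVec, dotProduct]
    rw [l1, l2] at h
    exact h.symm
  have hs_le : ∀ i, ∑ j, C' i j ≤ r i := by
    intro i
    rw [hrowsum i]
    exact (h1' (π i)).2 ⟨i, rfl, rfl⟩
  set t : ℝ := u (Fin.last ℓ) with ht
  have hvlast : v (Fin.last n) = t := by rw [hvj, hπlast]
  have htv : ∀ j, t ≤ v j := fun j => (hvj j) ▸ hLle (π j)
  have hmv : ∀ i, lam' * v i ≤ C.mulVec v i := by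
    intro i
    have e1 : lam' * v i = C'.mulVec v i := by rw [heigv]; simp
    have expand : ∀ (M : Matrix (Fin (n+1)) (Fin (n+1)) ℝ),
        M.mulVec v i = ∑ j, M i j * (v j - t) + (∑ j, M i j) * t := by
      intro M
      have : M.mulVec v i = ∑ j, M i j * v j := by
        simp [Matrix.mulVec, dotProduct]
      rw [this, Finset.sum_mul, ← Finset.sum_add_distrib]
      exact Finset.sum_congr rfl fun j _ => by ring
    have hterm : ∀ j, C' i j * (v j - t) ≤ C i j * (v j - t) := by
      intro j
      by_cases hj : j = Fin.last n
      · subst hj; rw [hvlast]; simp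
      · exact mul_le_mul_of_nonneg_right (h1 i j hj) (sub_nonneg.mpr (htv j))
    calc lam' * v i = C'.mulVec v i := e1
      _ = ∑ j, C' i j * (v j - t) + (∑ j, C' i j) * t := expand C'
      _ ≤ ∑ j, C i j * (v j - t) + r i * t := by
          apply add_le_add (Finset.sum_le_sum fun j _ => hterm j)
          exact mul_le_mul_of_nonneg_right (hs_le i) hL0
      _ = ∑ j, C i j * (v j - t) + (∑ j, C i j) * t := by rw [hrdef i]
      _ = C.mulVec v i := (expand C).symm
  exact le_specRad_of_subeigen C hC hlam' hvnn hv0 hmv
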